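/- There exist constants C ≥ 1 and c > 0 such that the following holds. Let G be a finite simple graph on n vertices with m ≥ 1 edges, let ε ∈ (0,1), and suppose G is ε-far from bipartite. Form a random subgraph G′ of G by keeping each edge of G independently with probability min{1, C·n/(ε·m)}. Then with probability at least 1 − 2^{−c·n}, the graph G′ is ε/2-far from bipartite and has at most (11/10)·C·n/ε edges. -/

import Mathlib

open MeasureTheory

/-- The number of edges of `G` whose two endpoints get the same color under the
2-coloring `f`. -/
noncomputable def monoEdgeCount {n : ℕ} (G : SimpleGraph (Fin n)) (f : Fin n → Bool) : ℕ :=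
  {e ∈ G.edgeSet | ∀ a ∈ e, ∀ b ∈ e, f a = f b}.ncard

/-- `G` is `δ`-far from bipartite: for every 2-coloring, at least a `δ` fraction of
the edges are monochromatic (equivalently, at least `δ·m` edges must be removed to
make `G` bipartite). -/
def FarFromBipartite {n : ℕ} (G : SimpleGraph (Fin n)) (δ : ℝ) : Prop :=
  ∀ f : Fin n → Bool, δ * (G.edgeSet.ncard : ℝ) ≤ (monoEdgeCount G f : ℝ)

/-- The subgraph of `G` obtained by keeping exactly the edges `e` with `κ e = true`. -/
def keepSubgraph {n : ℕ} (G : SimpleGraph (Fin n)) (κ : Sym2 (Fin n) → Bool) :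
    SimpleGraph (Fin n) where
  Adj v w := G.Adj v w ∧ κ s(v, w) = true
  symm := by
    constructor
    intro v w h
    refine ⟨G.symm.symm _ _ h.1, ?_⟩
    rw [Sym2.eq_swap]
    exact h.2
  loopless := ⟨fun v h => G.loopless.irrefl v h.1⟩

/-! ### Auxiliary probabilistic machinery on finite product spaces -/

section Aux

open Finset

set_option linter.unusedSectionVars false

variable {ι : Type*} [Fintype ι] [DecidableEq ι]

/-- The weight of an outcome `κ` under independent Bernoulli(p) sampling. -/
noncomputable def Wt (p : ℝ) (κ : ι → Bool) : ℝ := ∏ e, (if κ e then p else 1 - p)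

lemma Wt_nonneg {p : ℝ} (h0 : 0 ≤ p) (h1 : p ≤ 1) (κ : ι → Bool) : 0 ≤ Wt p κ :=
  Finset.prod_nonneg fun e _ => by split <;> linarith

lemma pi_meas_singleton (p : ℝ) (h0 : 0 ≤ p) (h1 : p ≤ 1)
    (hq : Real.toNNReal p ≤ 1) (κ : ι → Bool) :
    Measure.pi (fun _ : ι => (PMF.bernoulli (Real.toNNReal p) hq).toMeasure) {κ}
      = ENNReal.ofReal (Wt p κ) := by
  have : ({κ} : Set (ι → Bool)) = Set.pi Set.univ (fun e => {κ e}) := by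
    ext g; simp [funext_iff]
  rw [this, Measure.pi_pi]
  have : ∀ e : ι, (PMF.bernoulli (Real.toNNReal p) hq).toMeasure {κ e}
      = ENNReal.ofReal (if κ e then p else 1 - p) := by
    intro e
    rw [PMF.toMeasure_apply_singleton _ _ (measurableSet_singleton _), PMF.bernoulli_apply]
    cases hke : κ e
    · show (((1 - Real.toNNReal p : NNReal)) : ENNReal) = _
      rw [ENNReal.ofReal]; congr 1; ext
      rw [NNReal.coe_sub hq, Real.coe_toNNReal _ h0, NNReal.coe_one, if_neg (by simp),
        Real.coe_toNNReal _ (by linarith)]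
    · rfl
  simp_rw [this]
  rw [Wt, ← ENNReal.ofReal_prod_of_nonneg]
  intro e _
  split <;> linarith

lemma pi_meas_set (p : ℝ) (h0 : 0 ≤ p) (h1 : p ≤ 1)
    (hq : Real.toNNReal p ≤ 1) (S : Set (ι → Bool)) [DecidablePred (· ∈ S)] :
    Measure.pi (fun _ : ι => (PMF.bernoulli (Real.toNNReal p) hq).toMeasure) S
      = ENNReal.ofReal (∑ κ ∈ univ.filter (· ∈ S), Wt p κ) := by
  set μ := Measure.pi (fun _ : ι => (PMF.bernoulli (Real.toNNReal p) hq).toMeasure)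
  set T := univ.filter (· ∈ S) with hT
  have hS : S = ⋃ κ ∈ T, ({κ} : Set (ι → Bool)) := by
    ext g; simp [hT]
  rw [hS, measure_biUnion_finset]
  · rw [ENNReal.ofReal_sum_of_nonneg (fun κ _ => Wt_nonneg h0 h1 κ)]
    exact Finset.sum_congr rfl fun κ _ => pi_meas_singleton p h0 h1 hq κ
  · intro a _ b _ hab
    simp [Set.disjoint_singleton, hab]
  · intro κ _
    exact MeasurableSet.singleton κ

lemma sum_W_mul_prod (p : ℝ) (h : ι → Bool → ℝ) :
    ∑ κ : ι → Bool, Wt p κ * ∏ e, h e (κ e)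
      = ∏ e, ((1 - p) * h e false + p * h e true) := by
  have h1 : ∀ e : ι, (1 - p) * h e false + p * h e true
      = ∑ b : Bool, (if b then p else 1 - p) * h e b := by
    intro e; rw [Fintype.sum_bool]; simp [add_comm]
  simp_rw [h1]
  rw [Fintype.prod_sum]
  refine Finset.sum_congr rfl fun κ _ => ?_
  rw [Wt, ← Finset.prod_mul_distrib]

open scoped Classical in
lemma chernoff_core (p : ℝ) (h0 : 0 ≤ p) (h1 : p ≤ 1)
    (hq : Real.toNNReal p ≤ 1) (S : Set (ι → Bool)) (c : ℝ) (hc : 0 ≤ c)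
    (h : ι → Bool → ℝ) (hh : ∀ e b, 0 ≤ h e b)
    (hS : ∀ κ ∈ S, 1 ≤ c * ∏ e, h e (κ e)) :
    Measure.pi (fun _ : ι => (PMF.bernoulli (Real.toNNReal p) hq).toMeasure) S
      ≤ ENNReal.ofReal (c * ∏ e, ((1 - p) * h e false + p * h e true)) := by
  rw [pi_meas_set p h0 h1 hq S]
  apply ENNReal.ofReal_le_ofReal
  have key : ∀ κ : ι → Bool, 0 ≤ Wt p κ * (c * ∏ e, h e (κ e)) :=
    fun κ => mul_nonneg (Wt_nonneg h0 h1 κ)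
      (mul_nonneg hc (Finset.prod_nonneg fun e _ => hh e (κ e)))
  calc ∑ κ ∈ univ.filter (· ∈ S), Wt p κ
      ≤ ∑ κ ∈ univ.filter (· ∈ S), Wt p κ * (c * ∏ e, h e (κ e)) := by
        refine Finset.sum_le_sum fun κ hκ => ?_
        have := hS κ (by simpa using hκ)
        nlinarith [Wt_nonneg h0 h1 κ]
    _ ≤ ∑ κ : ι → Bool, Wt p κ * (c * ∏ e, h e (κ e)) :=
        Finset.sum_le_sum_of_subset_of_nonneg (Finset.subset_univ _)
          (fun κ _ _ => key κ)
    _ = c * ∑ κ : ι → Bool, Wt p κ * ∏ e, h e (κ e) := by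
        rw [Finset.mul_sum]; refine Finset.sum_congr rfl fun κ _ => by ring
    _ = c * ∏ e, ((1 - p) * h e false + p * h e true) := by rw [sum_W_mul_prod]

lemma prod_factor_eval (s : ℝ) (T : Finset ι) (κ : ι → Bool) :
    ∏ e : ι, (if e ∈ T ∧ κ e = true then s else 1)
      = s ^ (T.filter fun e => κ e = true).card := by
  classical
  rw [Finset.prod_ite, Finset.prod_const, Finset.prod_const_one, mul_one]
  congr 2
  ext e; simp

lemma prod_bound_eval (p s : ℝ) (T : Finset ι) :
    ∏ e : ι, ((1 - p) * (if e ∈ T ∧ (false : Bool) = true then s else 1)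
        + p * (if e ∈ T ∧ (true : Bool) = true then s else 1))
      = (1 - p + p * s) ^ T.card := by
  have : ∀ e : ι, (1 - p) * (if e ∈ T ∧ (false : Bool) = true then s else 1)
        + p * (if e ∈ T ∧ (true : Bool) = true then s else 1)
      = if e ∈ T then (1 - p + p * s) else 1 := by
    intro e
    by_cases he : e ∈ T
    · norm_num [he]
    · simp [he]
  rw [Finset.prod_congr rfl fun e _ => this e, Finset.prod_ite_mem, Finset.univ_inter,
    Finset.prod_const]

lemma lower_tail (p : ℝ) (h0 : 0 ≤ p) (h1 : p ≤ 1)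
    (hq : Real.toNNReal p ≤ 1) (T : Finset ι) (a : ℝ) :
    Measure.pi (fun _ : ι => (PMF.bernoulli (Real.toNNReal p) hq).toMeasure)
      {κ | ((T.filter fun e => κ e = true).card : ℝ) < a}
      ≤ ENNReal.ofReal (Real.exp (a / 2 - p * T.card * (1 - Real.exp (-2⁻¹ : ℝ)))) := by
  classical
  set s : ℝ := Real.exp (-2⁻¹ : ℝ) with hs
  have hs0 : 0 < s := Real.exp_pos _
  have hs1 : s ≤ 1 := Real.exp_le_one_iff.mpr (by norm_num)
  have key := chernoff_core p h0 h1 hq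
    {κ | ((T.filter fun e => κ e = true).card : ℝ) < a}
    (Real.exp (a / 2)) (Real.exp_pos _).le
    (fun e b => if e ∈ T ∧ b = true then s else 1)
    (fun e b => by split <;> positivity)
    (by
      intro κ hκ
      rw [prod_factor_eval]
      set X := (T.filter fun e => κ e = true).card
      have hXa : (X : ℝ) < a := hκ
      have : s ^ X = Real.exp ((X : ℝ) * (-2⁻¹)) := by
        rw [Real.exp_nat_mul]
      rw [this, ← Real.exp_add]
      apply Real.one_le_exp
      nlinarith)
  refine key.trans (ENNReal.ofReal_le_ofReal ?_)
  rw [prod_bound_eval]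
  have h2 : 1 - p + p * s = 1 + (-(p * (1 - s))) := by ring
  have h3 : (0:ℝ) ≤ 1 - p + p * s := by nlinarith
  calc Real.exp (a / 2) * (1 - p + p * s) ^ T.card
      ≤ Real.exp (a / 2) * Real.exp (-(p * (1 - s))) ^ T.card := by
        refine mul_le_mul_of_nonneg_left (pow_le_pow_left₀ h3 ?_ _) (Real.exp_pos _).le
        rw [h2]; exact Real.add_one_le_exp _ |>.trans_eq' (by ring)
    _ = Real.exp (a / 2 - p * T.card * (1 - s)) := by
        rw [← Real.exp_nat_mul, ← Real.exp_add]; ring_nf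

lemma upper_tail (p : ℝ) (h0 : 0 ≤ p) (h1 : p ≤ 1)
    (hq : Real.toNNReal p ≤ 1) (T : Finset ι) (a : ℝ) :
    Measure.pi (fun _ : ι => (PMF.bernoulli (Real.toNNReal p) hq).toMeasure)
      {κ | a < ((T.filter fun e => κ e = true).card : ℝ)}
      ≤ ENNReal.ofReal (Real.exp (-(a / 10) + p * T.card * (Real.exp (10⁻¹ : ℝ) - 1))) := by
  classical
  set θ : ℝ := Real.exp (10⁻¹ : ℝ) with hθ
  have hθ1 : 1 ≤ θ := Real.one_le_exp (by norm_num)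
  have key := chernoff_core p h0 h1 hq
    {κ | a < ((T.filter fun e => κ e = true).card : ℝ)}
    (Real.exp (-(a / 10))) (Real.exp_pos _).le
    (fun e b => if e ∈ T ∧ b = true then θ else 1)
    (fun e b => by split <;> positivity)
    (by
      intro κ hκ
      rw [prod_factor_eval]
      set X := (T.filter fun e => κ e = true).card
      have hXa : a < (X : ℝ) := hκ
      have : θ ^ X = Real.exp ((X : ℝ) * 10⁻¹) := by
        rw [Real.exp_nat_mul]
      rw [this, ← Real.exp_add]
      apply Real.one_le_exp
      nlinarith)
  refine key.trans (ENNReal.ofReal_le_ofReal ?_)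
  rw [prod_bound_eval]
  have h2 : 1 - p + p * θ = 1 + p * (θ - 1) := by ring
  have h3 : (0:ℝ) ≤ 1 - p + p * θ := by nlinarith
  calc Real.exp (-(a / 10)) * (1 - p + p * θ) ^ T.card
      ≤ Real.exp (-(a / 10)) * Real.exp (p * (θ - 1)) ^ T.card := by
        refine mul_le_mul_of_nonneg_left (pow_le_pow_left₀ h3 ?_ _) (Real.exp_pos _).le
        rw [h2]; exact Real.add_one_le_exp _ |>.trans_eq' (by ring)
    _ = Real.exp (-(a / 10) + p * T.card * (θ - 1)) := by
        rw [← Real.exp_nat_mul, ← Real.exp_add]; ring_nf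

end Aux

/-! ### Graph glue lemmas -/

lemma keep_mem_edgeSet {n : ℕ} (G : SimpleGraph (Fin n)) (κ : Sym2 (Fin n) → Bool)
    (e : Sym2 (Fin n)) :
    e ∈ (keepSubgraph G κ).edgeSet ↔ e ∈ G.edgeSet ∧ κ e = true := by
  induction e using Sym2.ind with
  | _ x y => simp [SimpleGraph.mem_edgeSet, keepSubgraph]

lemma keep_ncard {n : ℕ} (G : SimpleGraph (Fin n)) (κ : Sym2 (Fin n) → Bool)
    (E : Finset (Sym2 (Fin n))) (hE : ∀ e, e ∈ E ↔ e ∈ G.edgeSet) :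
    (keepSubgraph G κ).edgeSet.ncard = (E.filter fun e => κ e = true).card := by
  rw [← Set.ncard_coe_finset]
  congr 1
  ext e
  simp [keep_mem_edgeSet, hE]

lemma mono_keep {n : ℕ} (G : SimpleGraph (Fin n)) (κ : Sym2 (Fin n) → Bool)
    (f : Fin n → Bool) (Tf : Finset (Sym2 (Fin n)))
    (hTf : ∀ e, e ∈ Tf ↔ e ∈ G.edgeSet ∧ ∀ a ∈ e, ∀ b ∈ e, f a = f b) :
    monoEdgeCount (keepSubgraph G κ) f = (Tf.filter fun e => κ e = true).card := by
  rw [monoEdgeCount, ← Set.ncard_coe_finset]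
  congr 1
  ext e
  simp only [Finset.coe_filter, Set.mem_setOf_eq, Finset.mem_filter, hTf, keep_mem_edgeSet]
  tauto

lemma mono_self {n : ℕ} (G : SimpleGraph (Fin n))
    (f : Fin n → Bool) (Tf : Finset (Sym2 (Fin n)))
    (hTf : ∀ e, e ∈ Tf ↔ e ∈ G.edgeSet ∧ ∀ a ∈ e, ∀ b ∈ e, f a = f b) :
    monoEdgeCount G f = Tf.card := by
  rw [monoEdgeCount, ← Set.ncard_coe_finset]
  congr 1
  ext e
  simp [hTf]

lemma keep_true {n : ℕ} (G : SimpleGraph (Fin n)) :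
    keepSubgraph G (fun _ => true) = G := by
  ext v w
  simp [keepSubgraph]

/-! ### Numeric estimates -/

lemma exp_tenth_le : Real.exp (10⁻¹ : ℝ) ≤ 1.1075 := by
  have h := Real.exp_bound (x := (10⁻¹ : ℝ)) (by rw [abs_of_nonneg] <;> norm_num) (n := 2)
    (by norm_num)
  rw [abs_sub_le_iff] at h
  have h1 := h.1
  rw [abs_of_nonneg (by norm_num)] at h1
  have : ∑ m ∈ Finset.range 2, (10⁻¹:ℝ) ^ m / m.factorial = 1.1 := by
    simp [Finset.sum_range_succ, Nat.factorial]
    norm_num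
  rw [this] at h1
  norm_num [Nat.factorial] at h1 ⊢
  linarith

lemma exp_neg_half_le : Real.exp (-2⁻¹ : ℝ) ≤ 0.66 := by
  have h := Real.exp_bound (x := (-2⁻¹ : ℝ)) (by rw [abs_of_nonpos] <;> norm_num) (n := 3)
    (by norm_num)
  rw [abs_sub_le_iff] at h
  have h1 := h.1
  rw [abs_of_nonpos (by norm_num)] at h1
  have : ∑ m ∈ Finset.range 3, (-2⁻¹:ℝ) ^ m / m.factorial = 0.625 := by
    simp [Finset.sum_range_succ, Nat.factorial]
    norm_num
  rw [this] at h1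
  norm_num [Nat.factorial] at h1 ⊢
  linarith

lemma two_le_exp_one : (2:ℝ) ≤ Real.exp 1 := by
  have := Real.add_one_le_exp (1:ℝ)
  linarith

lemma exp_inv_bound {x : ℝ} (hx : 0 ≤ x) : Real.exp (-x) ≤ 1 / (1 + x) := by
  have h := Real.add_one_le_exp x
  have hp : (0:ℝ) < 1 + x := by linarith
  rw [Real.exp_neg, inv_eq_one_div, div_le_div_iff₀ (Real.exp_pos x) hp]
  linarith

/-! ### The main theorem -/
set_option maxHeartbeats 2000000

/-- There are constants `C ≥ 1` and `c > 0` such that: if `G` is a graph on `n`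
vertices with `m ≥ 1` edges which is `ε`-far from bipartite, and `G'` is the random
subgraph keeping each edge independently with probability `min 1 (C·n/(ε·m))`, then
with probability at least `1 - 2^{-c·n}` the graph `G'` is `ε/2`-far from bipartite
and has at most `(11/10)·C·n/ε` edges. -/
theorem sparsify_far_from_bipartite :
    ∃ C c : ℝ, 1 ≤ C ∧ 0 < c ∧
      ∀ (n : ℕ) (G : SimpleGraph (Fin n)) (ε : ℝ),
        0 < ε → ε < 1 → 1 ≤ G.edgeSet.ncard →
        FarFromBipartite G ε →
        ENNReal.ofReal (1 - (2 : ℝ) ^ (-(c * n)))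
          ≤ Measure.pi (fun _ : Sym2 (Fin n) =>
              (PMF.bernoulli
                  (Real.toNNReal (min 1 (C * n / (ε * G.edgeSet.ncard))))
                  (Real.toNNReal_le_one.mpr (min_le_left _ _))).toMeasure)
            {κ | FarFromBipartite (keepSubgraph G κ) (ε / 2) ∧
                 ((keepSubgraph G κ).edgeSet.ncard : ℝ) ≤ (11 / 10) * C * n / ε} := by
  classical
  refine ⟨300, 1/10, by norm_num, by norm_num, ?_⟩
  intro n G ε hε0 hε1 hm hFar
  have key : ∀ (hq : Real.toNNReal (min 1 (300 * (n:ℝ) / (ε * (G.edgeSet.ncard : ℝ)))) ≤ 1),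
      ENNReal.ofReal (1 - (2 : ℝ) ^ (-(1/10 * (n:ℝ))))
        ≤ Measure.pi (fun _ : Sym2 (Fin n) =>
            (PMF.bernoulli
                (Real.toNNReal (min 1 (300 * (n:ℝ) / (ε * (G.edgeSet.ncard : ℝ))))) hq).toMeasure)
          {κ | FarFromBipartite (keepSubgraph G κ) (ε / 2) ∧
               ((keepSubgraph G κ).edgeSet.ncard : ℝ) ≤ 11 / 10 * 300 * (n:ℝ) / ε} := by
    intro hq
    -- basic quantities
    have hfin : G.edgeSet.Finite := Set.toFinite _
    set E : Finset (Sym2 (Fin n)) := hfin.toFinset with hE_def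
    have hE : ∀ e, e ∈ E ↔ e ∈ G.edgeSet := fun e => hfin.mem_toFinset
    set m : ℝ := (G.edgeSet.ncard : ℝ) with hm_def
    have hEcard : (E.card : ℝ) = m := by
      rw [hm_def, Set.ncard_eq_toFinset_card _ hfin]
    have hm1 : (1:ℝ) ≤ m := by rw [hm_def]; exact_mod_cast hm
    have hmpos : (0:ℝ) < m := by linarith
    -- n ≥ 2
    have hne : G.edgeSet.Nonempty := by
      rw [Set.nonempty_iff_ne_empty]
      intro hemp
      rw [hemp] at hm
      simp at hm
    have hn2 : (2:ℝ) ≤ (n:ℝ) := by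
      obtain ⟨e, he⟩ := hne
      have h2n : 2 ≤ n := by
        induction e using Sym2.ind with
        | _ x y =>
          have hxy : x ≠ y := G.ne_of_adj he
          have h1n : 1 < Fintype.card (Fin n) :=
            Fintype.one_lt_card_iff_nontrivial.mpr ⟨⟨x, y, hxy⟩⟩
          simp at h1n; omega
      exact_mod_cast h2n
    have hnpos : (0:ℝ) < (n:ℝ) := by linarith
    -- the sampling probability
    set x : ℝ := 300 * (n:ℝ) / (ε * m) with hx_def
    set p : ℝ := min 1 x with hp_def
    have hx0 : 0 ≤ x := by
      rw [hx_def]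
      positivity
    have h0 : 0 ≤ p := le_min zero_le_one hx0
    have h1 : p ≤ 1 := min_le_left _ _
    set μ := Measure.pi (fun _ : Sym2 (Fin n) =>
        (PMF.bernoulli (Real.toNNReal p) hq).toMeasure) with hμ_def
    haveI : IsProbabilityMeasure μ := by rw [hμ_def]; infer_instance
    set S : Set (Sym2 (Fin n) → Bool) :=
      {κ | FarFromBipartite (keepSubgraph G κ) (ε / 2) ∧
           ((keepSubgraph G κ).edgeSet.ncard : ℝ) ≤ 11 / 10 * 300 * (n:ℝ) / ε} with hS_def
    set A : ℝ := 11 / 10 * 300 * (n:ℝ) / ε with hA_def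
    have hA : ε / 2 * A = 165 * (n:ℝ) := by
      rw [hA_def]
      field_simp
      ring
    have hA0 : 0 ≤ A := by rw [hA_def]; positivity
    -- monochromatic edge finsets
    set Tf : (Fin n → Bool) → Finset (Sym2 (Fin n)) :=
      fun f => E.filter (fun e => ∀ a ∈ e, ∀ b ∈ e, f a = f b) with hTf_def
    have hTf : ∀ f e, e ∈ Tf f ↔ e ∈ G.edgeSet ∧ ∀ a ∈ e, ∀ b ∈ e, f a = f b := by
      intro f e
      rw [hTf_def]
      simp [Finset.mem_filter, hE]
    have hTfbig : ∀ f, ε * m ≤ ((Tf f).card : ℝ) := by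
      intro f
      have h := hFar f
      rwa [mono_self G f (Tf f) (hTf f)] at h
    -- bad events
    set BadY : Set (Sym2 (Fin n) → Bool) :=
      {κ | A < ((E.filter fun e => κ e = true).card : ℝ)} with hBadY_def
    set BadF : (Fin n → Bool) → Set (Sym2 (Fin n) → Bool) :=
      fun f => {κ | (((Tf f).filter fun e => κ e = true).card : ℝ) < 165 * (n:ℝ)} with hBadF_def
    have hincl : Sᶜ ⊆ BadY ∪ ⋃ f, BadF f := by
      intro κ hκ
      by_contra hbad
      apply hκ
      rw [Set.mem_union, Set.mem_iUnion] at hbad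
      push_neg at hbad
      obtain ⟨hbY, hbF⟩ := hbad
      have hY : ((E.filter fun e => κ e = true).card : ℝ) ≤ A := by
        rw [hBadY_def] at hbY
        simpa using hbY
      have hX : ∀ f, 165 * (n:ℝ) ≤ (((Tf f).filter fun e => κ e = true).card : ℝ) := by
        intro f
        have := hbF f
        rw [hBadF_def] at this
        simpa using this
      rw [hS_def]
      refine ⟨?_, ?_⟩
      · intro f
        rw [mono_keep G κ f (Tf f) (hTf f), keep_ncard G κ E hE]
        calc ε / 2 * ((E.filter fun e => κ e = true).card : ℝ)
            ≤ ε / 2 * A := by nlinarith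
          _ = 165 * (n:ℝ) := hA
          _ ≤ _ := hX f
      · rw [keep_ncard G κ E hE]
        exact hY
    have hSm : MeasurableSet S := (Set.to_countable _).measurableSet
    -- the main probability bound
    have hbound : μ Sᶜ ≤ ENNReal.ofReal ((2:ℝ) ^ (-(1/10 * (n:ℝ)))) := by
      by_cases hx1 : 1 ≤ x
      · -- p = 1 : the graph is kept entirely almost surely
        have hp1 : p = 1 := min_eq_left hx1
        have hzero : μ Sᶜ = 0 := by
          rw [hμ_def, pi_meas_set p h0 h1 hq]
          rw [Finset.sum_eq_zero, ENNReal.ofReal_zero]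
          intro κ hκ
          rw [Finset.mem_filter] at hκ
          by_cases hk : κ = fun _ => true
          · exfalso
            have hmem : κ ∈ S := by
              subst hk
              rw [hS_def]
              refine ⟨?_, ?_⟩
              · rw [keep_true]
                intro f
                have := hFar f
                rw [← hm_def] at this
                have hmono : (0:ℝ) ≤ (monoEdgeCount G f : ℝ) := Nat.cast_nonneg _
                rw [← hm_def]
                nlinarith
              · rw [keep_true, ← hm_def]
                have h' : (0:ℝ) < ε * m := by positivity
                have hεm : ε * m ≤ 300 * (n:ℝ) := (one_le_div h').mp hx1
                rw [le_div_iff₀ hε0]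
                nlinarith
            exact absurd hmem hκ.2
          · obtain ⟨e, he⟩ := Function.ne_iff.mp hk
            have he' : κ e = false := by simpa using he
            rw [Wt]
            refine Finset.prod_eq_zero (Finset.mem_univ e) ?_
            rw [he', hp1]
            norm_num
        rw [hzero]
        exact bot_le
      · -- p = x < 1
        push_neg at hx1
        have hp_eq : p = x := min_eq_right hx1.le
        have hεm : (0:ℝ) < ε * m := by positivity
        have hpm : p * m = 300 * (n:ℝ) / ε := by
          rw [hp_eq, hx_def]
          field_simp
        have hpT : ∀ f, 300 * (n:ℝ) ≤ p * ((Tf f).card : ℝ) := by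
          intro f
          have h1' : p * (ε * m) = 300 * (n:ℝ) := by
            rw [hp_eq, hx_def]
            field_simp
          have h2' := hTfbig f
          nlinarith
        have hUB : μ BadY ≤ ENNReal.ofReal (Real.exp (-(3/4) * (n:ℝ))) := by
          rw [hμ_def, hBadY_def]
          refine (upper_tail p h0 h1 hq E A).trans (ENNReal.ofReal_le_ofReal
            (Real.exp_le_exp.mpr ?_))
          have hθ := exp_tenth_le
          have hθ1 : (1:ℝ) ≤ Real.exp (10⁻¹:ℝ) := Real.one_le_exp (by norm_num)
          have hPEm : p * (E.card : ℝ) = 300 * (n:ℝ) / ε := by rw [hEcard, hpm]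
          have hPEε : p * (E.card : ℝ) * ε = 300 * (n:ℝ) := by
            rw [hPEm]
            field_simp
          have hPE0 : 0 ≤ p * (E.card : ℝ) := mul_nonneg h0 (Nat.cast_nonneg _)
          have hAε : A * ε = 330 * (n:ℝ) := by
            rw [hA_def]
            field_simp
            ring
          nlinarith [mul_le_mul_of_nonneg_left hθ hPE0, hε0.le, hnpos.le]
        have hLB : ∀ f, μ (BadF f) ≤ ENNReal.ofReal (Real.exp (-(2:ℝ) * (n:ℝ))) := by
          intro f
          rw [hμ_def, hBadF_def]
          refine (lower_tail p h0 h1 hq (Tf f) (165 * (n:ℝ))).trans (ENNReal.ofReal_le_ofReal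
            (Real.exp_le_exp.mpr ?_))
          have hs := exp_neg_half_le
          have hs0 : 0 < Real.exp (-2⁻¹:ℝ) := Real.exp_pos _
          have hT0 : 0 ≤ p * ((Tf f).card : ℝ) := mul_nonneg h0 (Nat.cast_nonneg _)
          nlinarith [mul_le_mul_of_nonneg_left hs hT0, hpT f]
        have hsum : μ Sᶜ ≤ μ BadY + ∑ f : Fin n → Bool, μ (BadF f) := by
          calc μ Sᶜ ≤ μ (BadY ∪ ⋃ f, BadF f) := measure_mono hincl
            _ ≤ μ BadY + μ (⋃ f, BadF f) := measure_union_le _ _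
            _ ≤ μ BadY + ∑ f : Fin n → Bool, μ (BadF f) :=
                add_le_add_right (measure_iUnion_fintype_le _ _) _
        have hcard : ∑ f : Fin n → Bool, μ (BadF f)
            ≤ ENNReal.ofReal (Real.exp (-(n:ℝ))) := by
          calc ∑ f : Fin n → Bool, μ (BadF f)
              ≤ ∑ _f : Fin n → Bool, ENNReal.ofReal (Real.exp (-(2:ℝ) * (n:ℝ))) :=
                Finset.sum_le_sum (fun f _ => hLB f)
            _ = (Fintype.card (Fin n → Bool)) • ENNReal.ofReal (Real.exp (-(2:ℝ) * (n:ℝ))) := by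
                rw [Finset.sum_const, Finset.card_univ]
            _ = ENNReal.ofReal ((2:ℝ)^n * Real.exp (-(2:ℝ) * (n:ℝ))) := by
                rw [nsmul_eq_mul, ← ENNReal.ofReal_natCast,
                  ← ENNReal.ofReal_mul (by positivity)]
                congr 2
                rw [Fintype.card_fun]
                push_cast
                norm_num
            _ ≤ ENNReal.ofReal (Real.exp (-(n:ℝ))) := by
                apply ENNReal.ofReal_le_ofReal
                have h2n : (2:ℝ)^n ≤ Real.exp (n:ℝ) := by
                  calc (2:ℝ)^n ≤ (Real.exp 1)^n :=
                      pow_le_pow_left₀ (by norm_num) two_le_exp_one n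
                    _ = Real.exp ((n:ℝ) * 1) := (Real.exp_nat_mul 1 n).symm
                    _ = Real.exp (n:ℝ) := by rw [mul_one]
                calc (2:ℝ)^n * Real.exp (-(2:ℝ) * (n:ℝ))
                    ≤ Real.exp (n:ℝ) * Real.exp (-(2:ℝ) * (n:ℝ)) := by
                      exact mul_le_mul_of_nonneg_right h2n (Real.exp_pos _).le
                  _ = Real.exp (-(n:ℝ)) := by
                      rw [← Real.exp_add]
                      ring_nf
        calc μ Sᶜ ≤ μ BadY + ∑ f : Fin n → Bool, μ (BadF f) := hsum
          _ ≤ ENNReal.ofReal (Real.exp (-(3/4) * (n:ℝ)))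
              + ENNReal.ofReal (Real.exp (-(n:ℝ))) := add_le_add hUB hcard
          _ = ENNReal.ofReal (Real.exp (-(3/4) * (n:ℝ)) + Real.exp (-(n:ℝ))) := by
              rw [← ENNReal.ofReal_add (Real.exp_pos _).le (Real.exp_pos _).le]
          _ ≤ ENNReal.ofReal ((2:ℝ) ^ (-(1/10 * (n:ℝ)))) := by
              apply ENNReal.ofReal_le_ofReal
              have hpow : Real.exp (-(1/10 * (n:ℝ))) ≤ (2:ℝ) ^ (-(1/10 * (n:ℝ))) := by
                rw [Real.rpow_def_of_pos (by norm_num : (0:ℝ) < 2)]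
                apply Real.exp_le_exp.mpr
                have hlog1 : Real.log 2 ≤ 1 := by
                  have := Real.log_le_sub_one_of_pos (by norm_num : (0:ℝ) < 2)
                  linarith
                have hlog0 : 0 ≤ Real.log 2 := Real.log_nonneg (by norm_num)
                nlinarith
              have e1 : Real.exp (-(3/4) * (n:ℝ))
                  ≤ Real.exp (-(1/10 * (n:ℝ))) * Real.exp (-(13/10 : ℝ)) := by
                rw [← Real.exp_add]
                apply Real.exp_le_exp.mpr
                linarith
              have e2 : Real.exp (-(n:ℝ))
                  ≤ Real.exp (-(1/10 * (n:ℝ))) * Real.exp (-(9/5 : ℝ)) := by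
                rw [← Real.exp_add]
                apply Real.exp_le_exp.mpr
                linarith
              have b1 : Real.exp (-(13/10 : ℝ)) ≤ 10/23 := by
                have := exp_inv_bound (x := (13/10 : ℝ)) (by norm_num)
                norm_num at this ⊢
                linarith
              have b2 : Real.exp (-(9/5 : ℝ)) ≤ 5/14 := by
                have := exp_inv_bound (x := (9/5 : ℝ)) (by norm_num)
                norm_num at this ⊢
                linarith
              have hepos : (0:ℝ) < Real.exp (-(1/10 * (n:ℝ))) := Real.exp_pos _
              nlinarith
    -- conclude
    have hcompl : μ S = 1 - μ Sᶜ := by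
      have h := prob_compl_eq_one_sub (μ := μ) hSm.compl
      rw [compl_compl] at h
      exact h
    rw [hcompl]
    calc ENNReal.ofReal (1 - (2 : ℝ) ^ (-(1/10 * (n:ℝ))))
        = 1 - ENNReal.ofReal ((2:ℝ) ^ (-(1/10 * (n:ℝ)))) := by
          rw [ENNReal.ofReal_sub _ (by positivity), ENNReal.ofReal_one]
      _ ≤ 1 - μ Sᶜ := tsub_le_tsub_left hbound 1
  exact key _
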